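/- Let (𝔤, ⟨·,·⟩) be a 5-dimensional metric Lie algebra whose center z(𝔤) has dimension 3. Then (𝔤, ⟨·,·⟩) does not admit any strict conformal Killing-Yano tensor. -/

import Mathlib

section Defs

variable {g : Type*} [LieRing g] [LieAlgebra ℝ g]

/-- `B` is a (positive definite) inner product on the real Lie algebra `g`,
given as a bilinear form. -/
structure IsInnerProduct (B : g →ₗ[ℝ] g →ₗ[ℝ] ℝ) : Prop where
  symm : ∀ x y : g, B x y = B y x
  posdef : ∀ x : g, x ≠ 0 → 0 < B x x

/-- The Koszul formula characterizing the Levi-Civita connection of the metric Lie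
algebra `(g, B)`: `2⟨∇ₓy, z⟩ = ⟨[x,y], z⟩ − ⟨[y,z], x⟩ + ⟨[z,x], y⟩`. -/
def IsLeviCivita (B : g →ₗ[ℝ] g →ₗ[ℝ] ℝ) (D : g → g → g) : Prop :=
  ∀ x y z : g, 2 * B (D x y) z = B ⁅x, y⁆ z - B ⁅y, z⁆ x + B ⁅z, x⁆ y

/-- A skew-symmetric endomorphism with respect to `B`. -/
def IsSkewSymmetric (B : g →ₗ[ℝ] g →ₗ[ℝ] ℝ) (T : g →ₗ[ℝ] g) : Prop :=
  ∀ x y : g, B (T x) y = - B x (T y)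

/-- The conformal Killing-Yano equation for an endomorphism `T` with associated 1-form `θ`:
`⟨(∇ₓT)y, z⟩ + ⟨(∇_yT)x, z⟩ = 2⟨x,y⟩θ(z) − ⟨y,z⟩θ(x) − ⟨x,z⟩θ(y)`,
where `(∇ₓT)y = ∇ₓ(Ty) − T(∇ₓy)`. -/
def IsCKYWith (B : g →ₗ[ℝ] g →ₗ[ℝ] ℝ) (D : g → g → g) (T : g →ₗ[ℝ] g)
    (θ : g →ₗ[ℝ] ℝ) : Prop :=
  ∀ x y z : g,
    B (D x (T y) - T (D x y)) z + B (D y (T x) - T (D y x)) z =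
      2 * B x y * θ z - B y z * θ x - B x z * θ y

/-- A Killing-Yano tensor is a CKY tensor with `θ = 0`. -/
def IsKY (B : g →ₗ[ℝ] g →ₗ[ℝ] ℝ) (D : g → g → g) (T : g →ₗ[ℝ] g) : Prop :=
  IsCKYWith B D T 0

/-- A parallel tensor: `(∇ₓT)y = 0` for all `x, y`. -/
def IsParallelT (D : g → g → g) (T : g →ₗ[ℝ] g) : Prop :=
  ∀ x y : g, D x (T y) - T (D x y) = 0

/-- The orthogonal complement of a submodule with respect to the bilinear form `B`. -/
def orthComp (B : g →ₗ[ℝ] g →ₗ[ℝ] ℝ) (p : Submodule ℝ g) : Submodule ℝ g where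
  carrier := {x : g | ∀ y ∈ p, B x y = 0}
  add_mem' := by
    intro a b ha hb y hy
    simp only [map_add, LinearMap.add_apply, ha y hy, hb y hy, add_zero]
  zero_mem' := by
    intro y hy
    simp
  smul_mem' := by
    intro c a ha y hy
    simp only [map_smul, LinearMap.smul_apply, ha y hy, smul_eq_mul, mul_zero]

end Defs

/-- Core analytic lemma: for a central `c` orthogonal to all brackets,
`⟨c,c⟩ θ(w) = ⟨c,w⟩ θ(c)`. -/
lemma core_lemma {g : Type*} [LieRing g] [LieAlgebra ℝ g]
    (B : g →ₗ[ℝ] g →ₗ[ℝ] ℝ)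
    (D : g → g → g) (hD : IsLeviCivita B D)
    (T : g →ₗ[ℝ] g) (hT : IsSkewSymmetric B T)
    (θ : g →ₗ[ℝ] ℝ) (hCKY : IsCKYWith B D T θ)
    (c : g) (hc : ∀ x : g, ⁅x, c⁆ = 0) (hperp : ∀ x y : g, B ⁅x, y⁆ c = 0) :
    ∀ w : g, B c c * θ w = B c w * θ c := by
  have hc' : ∀ x : g, ⁅c, x⁆ = 0 := fun x => by rw [← lie_skew, hc x, neg_zero]
  have h1 : ∀ w : g, B (D c c) w = 0 := by
    intro w
    have := hD c c w
    rw [lie_self, hc w, hc' w] at this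
    simp at this
    linarith
  have h2 : ∀ w : g, B (D c (T c)) w = 0 := by
    intro w
    have := hD c (T c) w
    rw [hc' (T c), hc w, hperp (T c) w] at this
    simp at this
    linarith
  intro w
  have h3 := hCKY c c w
  have e1 : B (D c (T c) - T (D c c)) w = 0 := by
    rw [map_sub, LinearMap.sub_apply, h2 w, hT (D c c) w, h1 (T w)]
    ring
  rw [e1] at h3
  linarith


/-- A 5-dimensional metric Lie algebra with 3-dimensional center admits no
strict CKY tensor. -/
theorem dim5_center3_no_strict_cky {g : Type*} [LieRing g] [LieAlgebra ℝ g]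
    [FiniteDimensional ℝ g]
    (B : g →ₗ[ℝ] g →ₗ[ℝ] ℝ) (hB : IsInnerProduct B)
    (hdim : Module.finrank ℝ g = 5)
    (hcenter : Module.finrank ℝ (LieAlgebra.center ℝ g) = 3)
    (D : g → g → g) (hD : IsLeviCivita B D)
    (T : g →ₗ[ℝ] g) (hT : IsSkewSymmetric B T)
    (θ : g →ₗ[ℝ] ℝ) (hCKY : IsCKYWith B D T θ) :
    θ = 0 := by
  classical
  set Z : Submodule ℝ g := LieSubmodule.toSubmodule (LieAlgebra.center ℝ g) with hZ
  have hZmem : ∀ x ∈ Z, ∀ y : g, ⁅y, x⁆ = 0 := by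
    intro x hx y
    rw [hZ, LieSubmodule.mem_toSubmodule] at hx
    exact (LieModule.mem_maxTrivSubmodule ℝ g g x).mp hx y
  have hZrank : Module.finrank ℝ Z = 3 := hcenter
  obtain ⟨V, hV⟩ := Submodule.exists_isCompl Z
  have hVrank : Module.finrank ℝ V = 2 := by
    have := Submodule.finrank_add_eq_of_isCompl hV
    rw [hZrank, hdim] at this
    omega
  let b : Module.Basis (Fin 2) ℝ V := Module.finBasisOfFinrankEq ℝ V hVrank
  set u : g := (b 0 : g)
  set v : g := (b 1 : g)
  set w₀ : g := ⁅u, v⁆ with hw₀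
  -- every bracket is a multiple of w₀
  have hbr : ∀ x y : g, ∃ s : ℝ, ⁅x, y⁆ = s • w₀ := by
    have hdec : ∀ x : g, ∃ p ∈ Z, ∃ a c : ℝ, x = p + (a • u + c • v) := by
      intro x
      have hx : x ∈ Z ⊔ V := by rw [hV.sup_eq_top]; trivial
      obtain ⟨p, hp, q, hq, hpq⟩ := Submodule.mem_sup.mp hx
      refine ⟨p, hp, b.repr ⟨q, hq⟩ 0, b.repr ⟨q, hq⟩ 1, ?_⟩
      have := b.sum_repr ⟨q, hq⟩
      rw [Fin.sum_univ_two] at this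
      have hq' : q = b.repr ⟨q, hq⟩ 0 • u + b.repr ⟨q, hq⟩ 1 • v := by
        have := congrArg (Subtype.val) this
        simpa using this.symm
      rw [← hq', hpq]
    intro x y
    obtain ⟨p, hp, a, c, hx⟩ := hdec x
    obtain ⟨p', hp', a', c', hy⟩ := hdec y
    refine ⟨a * c' - c * a', ?_⟩
    have hpz : ∀ t : g, ⁅p, t⁆ = 0 := fun t => by
      rw [← lie_skew, hZmem p hp t, neg_zero]
    have hpz' : ∀ t : g, ⁅t, p'⁆ = 0 := fun t => hZmem p' hp' t
    have hvu : ⁅v, u⁆ = -w₀ := by rw [hw₀, ← lie_skew]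
    rw [hx, hy]
    simp only [add_lie, lie_add, smul_lie, lie_smul, lie_self, hpz, hpz', hvu,
      smul_zero, zero_add, add_zero, smul_neg]
    module
  -- the subspace of central elements orthogonal to all brackets and killed by θ
  set K : Submodule ℝ g := Z ⊓ LinearMap.ker (B w₀) ⊓ LinearMap.ker θ with hK
  have hker1 : 4 ≤ Module.finrank ℝ (LinearMap.ker (B w₀)) := by
    have h1 := LinearMap.finrank_range_add_finrank_ker (B w₀)
    have h2 : Module.finrank ℝ (LinearMap.range (B w₀)) ≤ 1 := by
      have := Submodule.finrank_le (LinearMap.range (B w₀))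
      simpa using this
    rw [hdim] at h1
    omega
  have hker2 : 4 ≤ Module.finrank ℝ (LinearMap.ker θ) := by
    have h1 := LinearMap.finrank_range_add_finrank_ker θ
    have h2 : Module.finrank ℝ (LinearMap.range θ) ≤ 1 := by
      have := Submodule.finrank_le (LinearMap.range θ)
      simpa using this
    rw [hdim] at h1
    omega
  have hKrank : 1 ≤ Module.finrank ℝ K := by
    have e1 := Submodule.finrank_sup_add_finrank_inf_eq Z (LinearMap.ker (B w₀))
    have e2 := Submodule.finrank_sup_add_finrank_inf_eq
      (Z ⊓ LinearMap.ker (B w₀)) (LinearMap.ker θ)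
    have f1 : Module.finrank ℝ ↥(Z ⊔ LinearMap.ker (B w₀)) ≤ 5 := by
      rw [← hdim]; exact Submodule.finrank_le _
    have f2 : Module.finrank ℝ ↥((Z ⊓ LinearMap.ker (B w₀)) ⊔ LinearMap.ker θ) ≤ 5 := by
      rw [← hdim]; exact Submodule.finrank_le _
    rw [hK]
    omega
  have hKbot : K ≠ ⊥ := by
    intro h
    rw [h, finrank_bot] at hKrank
    omega
  obtain ⟨c, hcK, hc0⟩ := (Submodule.ne_bot_iff K).mp hKbot
  rw [hK] at hcK
  obtain ⟨⟨hcZ, hcw⟩, hcθ⟩ := hcK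
  have hcw' : B w₀ c = 0 := LinearMap.mem_ker.mp hcw
  have hcθ' : θ c = 0 := LinearMap.mem_ker.mp hcθ
  have hcc : ∀ x : g, ⁅x, c⁆ = 0 := fun x => hZmem c hcZ x
  have hcperp : ∀ x y : g, B ⁅x, y⁆ c = 0 := by
    intro x y
    obtain ⟨s, hs⟩ := hbr x y
    rw [hs, map_smul, LinearMap.smul_apply, hcw', smul_zero]
  have hcore := core_lemma B D hD T hT θ hCKY c hcc hcperp
  ext w
  have := hcore w
  rw [hcθ', mul_zero] at this
  have hBcc : 0 < B c c := hB.posdef c hc0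
  simp only [LinearMap.zero_apply]
  rcases mul_eq_zero.mp this with h | h
  · exact absurd h (ne_of_gt hBcc)
  · exact h
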